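/- Let g : [t₀,∞) → ℝ be nonnegative differentiable with ġ(t) ≤ -γ(t)g(t) + a(t)g(t)^p + β(t) for some p > 1, where a, β, γ are continuous with a ≥ 0, β ≥ 0. If μ ∈ C¹, μ > 0, satisfies a(t)μ(t)^{-p} + β(t) ≤ (1/μ(t))(γ(t) - μ'(t)/μ(t)) for all t ≥ t₀ and μ(t₀)g(t₀) < 1, then g(t) < 1/μ(t) for all t ≥ t₀; if moreover μ(t) → ∞ then g(t) → 0. -/

import Mathlib

open Set Filter

/-- Special case `α(t,y) = a(t) y^p`, `p > 1`, of the main theorem. -/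
theorem stmt18
    (t₀ : ℝ) (ht₀ : 0 ≤ t₀) (p : ℝ) (hp : 1 < p)
    (g g' γ β a μ μ' : ℝ → ℝ)
    (hgnonneg : ∀ t ∈ Ici t₀, 0 ≤ g t)
    (hg : ∀ t ∈ Ici t₀, HasDerivAt g (g' t) t)
    (hβ : ContinuousOn β (Ici t₀)) (hβnonneg : ∀ t ∈ Ici t₀, 0 ≤ β t)
    (hγ : ContinuousOn γ (Ici t₀))
    (ha : ContinuousOn a (Ici t₀)) (hanonneg : ∀ t ∈ Ici t₀, 0 ≤ a t)
    (hineq : ∀ t ∈ Ici t₀, g' t ≤ -γ t * g t + a t * g t ^ p + β t)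
    (hμpos : ∀ t ∈ Ici t₀, 0 < μ t)
    (hμ : ∀ t ∈ Ici t₀, HasDerivAt μ (μ' t) t)
    (hμ'cont : ContinuousOn μ' (Ici t₀))
    (hcomp : ∀ t ∈ Ici t₀, a t * μ t ^ (-p) + β t ≤ (1 / μ t) * (γ t - μ' t / μ t))
    (hinit : μ t₀ * g t₀ < 1) :
    (∀ t ∈ Ici t₀, g t < 1 / μ t) ∧
      (Tendsto μ atTop atTop → Tendsto g atTop (nhds 0)) := by
  have hgc : ContinuousOn g (Ici t₀) := fun t ht => (hg t ht).continuousAt.continuousWithinAt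
  have hμc : ContinuousOn μ (Ici t₀) := fun t ht => (hμ t ht).continuousAt.continuousWithinAt
  -- extend γ continuously
  set c : ℝ → ℝ := fun t => γ (max t t₀) with hc
  have hccont : Continuous c :=
    hγ.comp_continuous (continuous_id.max continuous_const) (fun t => Set.mem_Ici.mpr (le_max_right _ _))
  have hceq : ∀ t ∈ Ici t₀, c t = γ t := fun t ht => by
    simp only [hc]; rw [max_eq_left ht]
  set G : ℝ → ℝ := fun t => ∫ s in t₀..t, c s with hGdef
  have hG : ∀ t, HasDerivAt G (c t) t := fun t =>
    (hccont.integral_hasStrictDerivAt t₀ t).hasDerivAt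
  set ψ : ℝ → ℝ := fun t => (μ t)⁻¹ - g t with hψdef
  have hψc : ContinuousOn ψ (Ici t₀) :=
    (hμc.inv₀ (fun t ht => (hμpos t ht).ne')).sub hgc
  have hψ0 : 0 < ψ t₀ := by
    have hm := hμpos t₀ (self_mem_Ici)
    have : g t₀ < (μ t₀)⁻¹ := by
      rw [← one_div, lt_div_iff₀ hm]
      linarith [mul_comm (μ t₀) (g t₀)]
    simpa [hψdef, sub_pos] using this
  set h : ℝ → ℝ := fun t => ψ t * Real.exp (G t) with hhdef
  -- derivative of h
  have hderiv : ∀ t ∈ Ici t₀, HasDerivAt h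
      ((-μ' t / μ t ^ 2 - g' t) * Real.exp (G t) + ψ t * (Real.exp (G t) * c t)) t := by
    intro t ht
    have h1 : HasDerivAt (fun s => (μ s)⁻¹) (-μ' t / μ t ^ 2) t := (hμ t ht).inv (hμpos t ht).ne'
    have h2 : HasDerivAt ψ (-μ' t / μ t ^ 2 - g' t) t := h1.sub (hg t ht)
    have h3 : HasDerivAt (fun s => Real.exp (G s)) (Real.exp (G t) * c t) t := (hG t).exp
    exact h2.mul h3
  -- key derivative nonnegativity
  have hkey : ∀ t ∈ Ici t₀, 0 ≤ ψ t →
      0 ≤ (-μ' t / μ t ^ 2 - g' t) * Real.exp (G t) + ψ t * (Real.exp (G t) * c t) := by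
    intro t ht hψt
    have hm := hμpos t ht
    have hgt := hgnonneg t ht
    have hgle : g t ≤ (μ t)⁻¹ := by simpa [hψdef, sub_nonneg] using hψt
    have hpow : g t ^ p ≤ μ t ^ (-p) := by
      have h1 : g t ^ p ≤ ((μ t)⁻¹) ^ p := Real.rpow_le_rpow hgt hgle (by linarith)
      have h2 : ((μ t)⁻¹) ^ p = μ t ^ (-p) := by
        rw [Real.inv_rpow hm.le, Real.rpow_neg hm.le]
      linarith [h1, h2.le, h2.ge]
    have hA : a t * g t ^ p ≤ a t * μ t ^ (-p) :=
      mul_le_mul_of_nonneg_left hpow (hanonneg t ht)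
    have hcompt := hcomp t ht
    have hcompt' : a t * μ t ^ (-p) + β t ≤ γ t / μ t - μ' t / μ t ^ 2 := by
      have : (1 / μ t) * (γ t - μ' t / μ t) = γ t / μ t - μ' t / μ t ^ 2 := by
        field_simp
      linarith [hcompt, this.le, this.ge]
    have hineqt := hineq t ht
    have hmain : 0 ≤ -μ' t / μ t ^ 2 - g' t + γ t * ψ t := by
      have hexp : γ t * ψ t = γ t * (μ t)⁻¹ - γ t * g t := by
        simp [hψdef]; ring
      have : γ t / μ t = γ t * (μ t)⁻¹ := by rw [div_eq_mul_inv]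
      have hneg : -μ' t / μ t ^ 2 = -(μ' t / μ t ^ 2) := by ring
      linarith [hineqt, hA, hcompt', hexp, this, hneg]
    have hE : (0:ℝ) < Real.exp (G t) := Real.exp_pos _
    have : (-μ' t / μ t ^ 2 - g' t) * Real.exp (G t) + ψ t * (Real.exp (G t) * c t)
        = (-μ' t / μ t ^ 2 - g' t + γ t * ψ t) * Real.exp (G t) := by
      rw [hceq t ht]; ring
    rw [this]
    positivity
  -- main claim: ψ > 0 on Ici t₀
  have hmainpos : ∀ t ∈ Ici t₀, 0 < ψ t := by
    by_contra hcon
    push_neg at hcon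
    obtain ⟨t₂, ht₂, hψt₂⟩ := hcon
    set S : Set ℝ := {t | t ∈ Ici t₀ ∧ ψ t ≤ 0} with hS
    have hSne : S.Nonempty := ⟨t₂, ht₂, hψt₂⟩
    have hSbdd : BddBelow S := ⟨t₀, fun t htS => htS.1⟩
    have hSclosed : IsClosed S :=
      hψc.preimage_isClosed_of_isClosed isClosed_Ici isClosed_Iic
    set t₁ := sInf S with ht₁def
    have ht₁S : t₁ ∈ S := hSclosed.csInf_mem hSne hSbdd
    have ht₁ : t₀ ≤ t₁ := ht₁S.1
    have ht₁gt : t₀ < t₁ := by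
      rcases lt_or_eq_of_le ht₁ with h | h
      · exact h
      · exact absurd (h ▸ ht₁S.2) (not_le.mpr hψ0)
    have hpos_before : ∀ t ∈ Ico t₀ t₁, 0 < ψ t := by
      intro t ⟨htl, htu⟩
      by_contra hnp
      push_neg at hnp
      exact absurd (csInf_le hSbdd ⟨htl, hnp⟩) (not_le.mpr htu)
    -- h monotone on [t₀, t₁]
    have hmono : MonotoneOn h (Icc t₀ t₁) := by
      apply monotoneOn_of_deriv_nonneg (convex_Icc t₀ t₁)
      · have hGcont : Continuous G := continuous_iff_continuousAt.mpr fun t => (hG t).continuousAt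
        exact (hψc.mono Icc_subset_Ici_self).mul (Real.continuous_exp.comp hGcont).continuousOn
      · intro t htint
        rw [interior_Icc] at htint
        exact ((hderiv t (le_of_lt htint.1)).differentiableAt).differentiableWithinAt
      · intro t htint
        rw [interior_Icc] at htint
        have ht : t ∈ Ici t₀ := le_of_lt htint.1
        rw [(hderiv t ht).deriv]
        exact hkey t ht (le_of_lt (hpos_before t ⟨le_of_lt htint.1, htint.2⟩))
    have h01 : h t₀ ≤ h t₁ := hmono (left_mem_Icc.mpr ht₁) (right_mem_Icc.mpr ht₁) ht₁
    have hh0 : 0 < h t₀ := mul_pos hψ0 (Real.exp_pos _)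
    have hh1 : h t₁ ≤ 0 := mul_nonpos_of_nonpos_of_nonneg ht₁S.2 (Real.exp_pos _).le
    linarith
  have hfirst : ∀ t ∈ Ici t₀, g t < 1 / μ t := by
    intro t ht
    have := hmainpos t ht
    rw [one_div]
    simpa [hψdef, sub_pos] using this
  refine ⟨hfirst, fun hμtop => ?_⟩
  apply tendsto_of_tendsto_of_tendsto_of_le_of_le' tendsto_const_nhds hμtop.inv_tendsto_atTop
  · filter_upwards [eventually_ge_atTop t₀] with t ht using hgnonneg t ht
  · filter_upwards [eventually_ge_atTop t₀] with t ht
    have := hfirst t ht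
    rw [one_div] at this
    exact this.le
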